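/- For j ≥ 1 let Δ_j = {2^{j−1}(2s−1) : s ∈ ℕ, s ≥ 1}, so that the Δ_j partition the positive integers, and let I = {A ⊆ ℕ : A ∩ Δ_j ≠ ∅ for only finitely many j}; then I is an admissible ideal. Work in ℝ² with the Euclidean norm, coordinatewise order, and the norm topology, and define t_n = n for all n ≥ 1 and x_n = (1, −2) if n is a power of 2, x_n = (−1, 2) otherwise. Then the weighted I_τ-cluster point set of x equals {(1,−2), (−1,2)}; in particular both (1,−2) and (−1,2) are weighted I_τ-cluster points of x, but their lattice supremum (1,−2) ⊔ (−1,2) = (1,2) and their lattice infimum (1,−2) ⊓ (−1,2) = (−1,−2) are not weighted I_τ-cluster points of x. -/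

import Mathlib

open Topology Filter Set

/-- An admissible ideal on ℕ: contains all finite sets, closed under subsets
and finite unions, and does not contain ℕ itself. -/
def IsAdmissibleIdeal (I : Set (Set ℕ)) : Prop :=
  (∀ A : Set ℕ, A.Finite → A ∈ I) ∧
  (∀ A B : Set ℕ, A ∈ I → B ⊆ A → B ∈ I) ∧
  (∀ A B : Set ℕ, A ∈ I → B ∈ I → A ∪ B ∈ I) ∧
  (Set.univ : Set ℕ) ∉ I

/-- `Δ j = {2 ^ (j - 1) * (2 * s - 1) : s ≥ 1}`, for `j ≥ 1`; these sets partition the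
positive integers. -/
def Delta (j : ℕ) : Set ℕ := {m | ∃ s : ℕ, 1 ≤ s ∧ m = 2 ^ (j - 1) * (2 * s - 1)}

/-- The ideal of Example 8: sets meeting only finitely many of the `Δ j`. -/
def idealDelta : Set (Set ℕ) :=
  {A | {j : ℕ | 1 ≤ j ∧ (A ∩ Delta j).Nonempty}.Finite}

open Classical in
/-- The sequence of Theorem 2.6: `x n = (1, -2)` if `n` is a power of 2 and
`x n = (-1, 2)` otherwise. -/
noncomputable def xSeq18 : ℕ → ℝ × ℝ := fun n =>
  if ∃ p : ℕ, n = 2 ^ p then (1, -2) else (-1, 2)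

/-- The set of weighted `I`-τ-cluster points of `xSeq18` in ℝ² with weights `t n = n`. -/
def clusterSet18 : Set (ℝ × ℝ) :=
  {c | ∀ U ∈ 𝓝 (0 : ℝ × ℝ), {n : ℕ | (n : ℝ) • (xSeq18 n - c) ∈ U} ∉ idealDelta}

lemma delta_unique_aux {j k a : ℕ} (hj : 1 ≤ j) (hjk : j ≤ k)
    (ha : a ∈ Delta j) (hb : a ∈ Delta k) : j = k := by
  obtain ⟨s, hs, rfl⟩ := ha
  obtain ⟨t, ht, heq⟩ := hb
  have hpow : (2:ℕ) ^ (k - 1) = 2 ^ (j - 1) * 2 ^ (k - j) := by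
    rw [← pow_add]; congr 1; omega
  rw [hpow, mul_assoc] at heq
  have h2 : 2 * s - 1 = 2 ^ (k - j) * (2 * t - 1) :=
    Nat.eq_of_mul_eq_mul_left (by positivity) heq
  by_contra hne
  have hd : k - j ≠ 0 := by omega
  have hdvd : 2 ∣ 2 * s - 1 := h2 ▸ (dvd_pow_self 2 hd).mul_right _
  obtain ⟨m, hm⟩ := hdvd
  omega

lemma delta_unique {j k a : ℕ} (hj : 1 ≤ j) (hk : 1 ≤ k)
    (ha : a ∈ Delta j) (hb : a ∈ Delta k) : j = k := by
  rcases le_total j k with h | h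
  · exact delta_unique_aux hj h ha hb
  · exact (delta_unique_aux hk h hb ha).symm

lemma finite_mem_idealDelta {A : Set ℕ} (hA : A.Finite) : A ∈ idealDelta := by
  have hsub : {j : ℕ | 1 ≤ j ∧ (A ∩ Delta j).Nonempty} ⊆
      ⋃ a ∈ A, {j : ℕ | 1 ≤ j ∧ a ∈ Delta j} := by
    rintro j ⟨hj, a, haA, haD⟩
    exact Set.mem_biUnion haA ⟨hj, haD⟩
  refine Set.Finite.subset (Set.Finite.biUnion hA fun a _ => ?_) hsub
  exact Set.Subsingleton.finite fun j hj k hk => delta_unique hj.1 hk.1 hj.2 hk.2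

lemma idealDelta_mono {A B : Set ℕ} (hA : A ∈ idealDelta) (hBA : B ⊆ A) :
    B ∈ idealDelta := by
  refine Set.Finite.subset hA fun j hj => ⟨hj.1, ?_⟩
  exact hj.2.mono (Set.inter_subset_inter_left _ hBA)

lemma isAdmissible_idealDelta : IsAdmissibleIdeal idealDelta := by
  refine ⟨fun A hA => finite_mem_idealDelta hA,
    fun A B hA hBA => idealDelta_mono hA hBA, fun A B hA hB => ?_, ?_⟩
  · have : {j : ℕ | 1 ≤ j ∧ ((A ∪ B) ∩ Delta j).Nonempty} ⊆
        {j : ℕ | 1 ≤ j ∧ (A ∩ Delta j).Nonempty} ∪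
        {j : ℕ | 1 ≤ j ∧ (B ∩ Delta j).Nonempty} := by
      rintro j ⟨hj, a, (haA | haB), haD⟩
      · exact Or.inl ⟨hj, a, haA, haD⟩
      · exact Or.inr ⟨hj, a, haB, haD⟩
    exact Set.Finite.subset (hA.union hB) this
  · intro h
    have hsub : Set.Ici 1 ⊆ {j : ℕ | 1 ≤ j ∧ ((Set.univ : Set ℕ) ∩ Delta j).Nonempty} := by
      intro j hj
      exact ⟨hj, 2 ^ (j - 1), Set.mem_univ _, 1, le_refl 1, by ring⟩
    exact (((Set.Ici_infinite 1).mono hsub)) h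

lemma pow_mem_cluster : ((1 : ℝ), (-2 : ℝ)) ∈ clusterSet18 := by
  intro U hU hmem
  have hsub : {n : ℕ | ∃ p : ℕ, n = 2 ^ p} ⊆
      {n : ℕ | (n : ℝ) • (xSeq18 n - ((1 : ℝ), (-2 : ℝ))) ∈ U} := by
    intro n hn
    have hx : xSeq18 n = ((1 : ℝ), (-2 : ℝ)) := by
      unfold xSeq18; exact if_pos hn
    simp only [Set.mem_setOf_eq, hx, sub_self, smul_zero]
    exact mem_of_mem_nhds hU
  have hP := idealDelta_mono hmem hsub
  have hsub2 : Set.Ici 1 ⊆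
      {j : ℕ | 1 ≤ j ∧ ({n : ℕ | ∃ p : ℕ, n = 2 ^ p} ∩ Delta j).Nonempty} := by
    intro j hj
    refine ⟨hj, 2 ^ (j - 1), ⟨j - 1, rfl⟩, 1, le_refl 1, by ring⟩
  exact (((Set.Ici_infinite 1).mono hsub2)) hP

lemma npow_mem_cluster : ((-1 : ℝ), (2 : ℝ)) ∈ clusterSet18 := by
  intro U hU hmem
  have hsub : {n : ℕ | ¬∃ p : ℕ, n = 2 ^ p} ⊆
      {n : ℕ | (n : ℝ) • (xSeq18 n - ((-1 : ℝ), (2 : ℝ))) ∈ U} := by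
    intro n hn
    have hx : xSeq18 n = ((-1 : ℝ), (2 : ℝ)) := by
      unfold xSeq18; exact if_neg hn
    simp only [Set.mem_setOf_eq, hx, sub_self, smul_zero]
    exact mem_of_mem_nhds hU
  have hP := idealDelta_mono hmem hsub
  have hsub2 : Set.Ici 1 ⊆
      {j : ℕ | 1 ≤ j ∧ ({n : ℕ | ¬∃ p : ℕ, n = 2 ^ p} ∩ Delta j).Nonempty} := by
    intro j hj
    refine ⟨hj, 2 ^ (j - 1) * 3, ?_, 2, by norm_num⟩
    rintro ⟨p, hp⟩
    have h3 : (3 : ℕ) ∣ 2 ^ p := ⟨2 ^ (j - 1), by omega⟩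
    have := (Nat.Prime.dvd_of_dvd_pow (p := 3) (by norm_num) h3)
    omega
  exact (((Set.Ici_infinite 1).mono hsub2)) hP

lemma cluster_subset {c : ℝ × ℝ} (hc : c ∈ clusterSet18) :
    c = ((1 : ℝ), (-2 : ℝ)) ∨ c = ((-1 : ℝ), (2 : ℝ)) := by
  by_contra hne
  push_neg at hne
  obtain ⟨h1, h2⟩ := hne
  set ε := min ‖((1 : ℝ), (-2 : ℝ)) - c‖ ‖((-1 : ℝ), (2 : ℝ)) - c‖ with hε_def
  have hε : 0 < ε := lt_min (norm_sub_pos_iff.mpr (Ne.symm h1)) (norm_sub_pos_iff.mpr (Ne.symm h2))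
  refine hc (Metric.ball 0 ε) (Metric.ball_mem_nhds _ hε) (finite_mem_idealDelta ?_)
  refine Set.Finite.subset (Set.finite_singleton 0) ?_
  intro n hn
  simp only [Set.mem_setOf_eq, Metric.mem_ball, dist_zero_right] at hn
  by_contra h0
  have hn1 : (1 : ℝ) ≤ (n : ℝ) := by
    exact_mod_cast Nat.one_le_iff_ne_zero.mpr h0
  have hx : ε ≤ ‖xSeq18 n - c‖ := by
    unfold xSeq18
    split_ifs with h
    · exact min_le_left _ _
    · exact min_le_right _ _
  rw [norm_smul, Real.norm_natCast] at hn
  nlinarith [norm_nonneg (xSeq18 n - c)]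

/-- `idealDelta` is an admissible ideal, and the weighted `I`-τ-cluster point
set of the sequence above equals `{(1, -2), (-1, 2)}`; in particular both points are
weighted cluster points but their lattice supremum `(1, 2)` and lattice infimum `(-1, -2)`
are not. -/
theorem clusterSet_not_latticeClosed_example :
    IsAdmissibleIdeal idealDelta ∧
    clusterSet18 = {((1 : ℝ), (-2 : ℝ)), ((-1 : ℝ), (2 : ℝ))} ∧
    (((1 : ℝ), (-2 : ℝ)) ⊔ ((-1 : ℝ), (2 : ℝ)) = ((1 : ℝ), (2 : ℝ)) ∧
      ((1 : ℝ), (2 : ℝ)) ∉ clusterSet18) ∧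
    (((1 : ℝ), (-2 : ℝ)) ⊓ ((-1 : ℝ), (2 : ℝ)) = ((-1 : ℝ), (-2 : ℝ)) ∧
      ((-1 : ℝ), (-2 : ℝ)) ∉ clusterSet18) := by
  have hset : clusterSet18 = {((1 : ℝ), (-2 : ℝ)), ((-1 : ℝ), (2 : ℝ))} := by
    apply Set.eq_of_subset_of_subset
    · intro c hc
      rcases cluster_subset hc with h | h <;> simp [h]
    · intro c hc
      rcases hc with h | h
      · exact h ▸ pow_mem_cluster
      · rw [Set.mem_singleton_iff] at h
        exact h ▸ npow_mem_cluster
  refine ⟨isAdmissible_idealDelta, hset, ⟨?_, ?_⟩, ⟨?_, ?_⟩⟩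
  · simp [Prod.ext_iff]
  · rw [hset]; simp [Prod.ext_iff]; norm_num
  · simp [Prod.ext_iff]
  · rw [hset]; simp [Prod.ext_iff]; norm_num
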